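/- Suppose the summands of an absolutely monotonic power series I(x) = Σ a_n x^n concentrate superpolynomially near n ≈ f(x), where f has degree d ≥ 1 and positive leading coefficient c_d. Then lim_{x→+∞} (log I(x))/x^d = c_d/d, and also lim_{x→+∞} (log μ(x))/x^d = c_d/d where μ(x) = max_n a_n x^n. -/

import Mathlib

open Filter Asymptotics Polynomial

noncomputable def Iser (a : ℕ → ℝ) (x : ℝ) : ℝ := ∑' n : ℕ, a n * x ^ n

noncomputable def sumLE (a : ℕ → ℝ) (x y : ℝ) : ℝ :=
  ∑' n : ℕ, if (n : ℤ) ≤ ⌊y⌋ then a n * x ^ n else 0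

noncomputable def sumGE (a : ℕ → ℝ) (x y : ℝ) : ℝ :=
  ∑' n : ℕ, if ⌊y⌋ ≤ (n : ℤ) then a n * x ^ n else 0

/-- `I(x) = Σ aₙ xⁿ` is absolutely monotonic: all coefficients are nonnegative and
the series converges for every `x > 0`. -/
def AbsMono (a : ℕ → ℝ) : Prop :=
  (∀ n, 0 ≤ a n) ∧ ∀ x : ℝ, 0 < x → Summable fun n : ℕ => a n * x ^ n

/-- The summands of `Σ aₙ xⁿ` concentrate superpolynomially near `n ≈ f(x)` with
window term `C x^{-ν}`. -/
def SuperConc (a : ℕ → ℝ) (f : ℝ → ℝ) (C ν : ℝ) : Prop :=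
  ∀ p : ℝ, 0 < p →
    ((fun x : ℝ => sumLE a x (f x * (1 - C * x ^ (-ν))) / Iser a x)
        =o[atTop] fun x : ℝ => x ^ (-p)) ∧
    ((fun x : ℝ => sumGE a x (f x * (1 + C * x ^ (-ν))) / Iser a x)
        =o[atTop] fun x : ℝ => x ^ (-p))

/-- The summands of `Σ aₙ xⁿ` concentrate exponentially near `n ≈ f(x)` with
window term `C x^{-ν}` and parameters `(α, β)`. -/
def ExpConc (a : ℕ → ℝ) (f : ℝ → ℝ) (C ν α β : ℝ) : Prop :=
  ((fun x : ℝ => sumLE a x (f x * (1 - C * x ^ (-ν))) / Iser a x)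
      =O[atTop] fun x : ℝ => Real.exp (-α * x ^ β)) ∧
  ((fun x : ℝ => sumGE a x (f x * (1 + C * x ^ (-ν))) / Iser a x)
      =O[atTop] fun x : ℝ => Real.exp (-α * x ^ β))

/-- A real sequence is subpolynomial if `bₙ / n^p → 0` for every `p > 0`. -/
def Subpoly (b : ℕ → ℝ) : Prop :=
  ∀ p : ℝ, 0 < p → Tendsto (fun n : ℕ => b n / (n : ℝ) ^ p) atTop (nhds 0)

-- ## auxiliary lemmas

lemma term_nonneg {a : ℕ → ℝ} (ha : AbsMono a) {x : ℝ} (hx : 0 ≤ x) (n : ℕ) :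
    0 ≤ a n * x ^ n := mul_nonneg (ha.1 n) (pow_nonneg hx n)

lemma summable_ite {a : ℕ → ℝ} (ha : AbsMono a) {x : ℝ} (hx : 0 < x)
    (P : ℕ → Prop) [DecidablePred P] :
    Summable fun n => if P n then a n * x ^ n else 0 := by
  refine Summable.of_nonneg_of_le (fun n => ?_) (fun n => ?_) (ha.2 x hx)
  · split
    · exact term_nonneg ha hx.le n
    · exact le_rfl
  · split
    · exact le_rfl
    · exact term_nonneg ha hx.le n

lemma tsum_ite_nonneg {a : ℕ → ℝ} (ha : AbsMono a) {x : ℝ} (hx : 0 ≤ x)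
    (P : ℕ → Prop) [DecidablePred P] :
    0 ≤ ∑' n, if P n then a n * x ^ n else 0 := by
  refine tsum_nonneg fun n => ?_
  split
  · exact term_nonneg ha hx n
  · exact le_rfl

lemma Iser_pos {a : ℕ → ℝ} (ha : AbsMono a) (hne : ∃ n, a n ≠ 0) {x : ℝ} (hx : 0 < x) :
    0 < Iser a x := by
  obtain ⟨n, hn⟩ := hne
  have h1 : 0 < a n * x ^ n :=
    mul_pos (lt_of_le_of_ne (ha.1 n) (Ne.symm hn)) (pow_pos hx n)
  exact h1.trans_le (Summable.le_tsum (ha.2 x hx) n fun j _ => term_nonneg ha hx.le j)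

lemma Iser_mono {a : ℕ → ℝ} (ha : AbsMono a) {x y : ℝ} (hx : 0 < x) (hxy : x ≤ y) :
    Iser a x ≤ Iser a y := by
  refine Summable.tsum_le_tsum (fun n => ?_) (ha.2 x hx) (ha.2 y (hx.trans_le hxy))
  exact mul_le_mul_of_nonneg_left (pow_le_pow_left₀ hx.le hxy n) (ha.1 n)

lemma le_Iser_ite {a : ℕ → ℝ} (ha : AbsMono a) {x : ℝ} (hx : 0 < x)
    (P : ℕ → Prop) [DecidablePred P] :
    (∑' n, if P n then a n * x ^ n else 0) ≤ Iser a x := by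
  refine Summable.tsum_le_tsum (fun n => ?_) (summable_ite ha hx P) (ha.2 x hx)
  split
  · exact le_rfl
  · exact term_nonneg ha hx.le n

lemma Iser_le_three {a : ℕ → ℝ} (ha : AbsMono a) {x : ℝ} (hx : 0 < x) (y₁ y₂ : ℝ) :
    Iser a x ≤ sumLE a x y₁ +
      ((∑' n : ℕ, if (⌊y₁⌋ < (n : ℤ) ∧ (n : ℤ) < ⌊y₂⌋) then a n * x ^ n else 0) + sumGE a x y₂) := by
  have hs1 : Summable fun n : ℕ => if (n : ℤ) ≤ ⌊y₁⌋ then a n * x ^ n else 0 :=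
    summable_ite ha hx _
  have hs2 : Summable fun n : ℕ => if (⌊y₁⌋ < (n : ℤ) ∧ (n : ℤ) < ⌊y₂⌋) then a n * x ^ n else 0 :=
    summable_ite ha hx _
  have hs3 : Summable fun n : ℕ => if ⌊y₂⌋ ≤ (n : ℤ) then a n * x ^ n else 0 :=
    summable_ite ha hx _
  unfold Iser sumLE sumGE
  rw [← Summable.tsum_add hs2 hs3, ← Summable.tsum_add hs1 (hs2.add hs3)]
  refine Summable.tsum_le_tsum (fun n => ?_) (ha.2 x hx) (hs1.add (hs2.add hs3))
  have h0 := term_nonneg ha hx.le n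
  rcases le_or_gt (n : ℤ) ⌊y₁⌋ with h1 | h1
  · rw [if_pos h1]
    have : (0:ℝ) ≤ (if (⌊y₁⌋ < (n : ℤ) ∧ (n : ℤ) < ⌊y₂⌋) then a n * x ^ n else 0) +
        (if ⌊y₂⌋ ≤ (n : ℤ) then a n * x ^ n else 0) := by positivity
    linarith
  · rw [if_neg (not_le.mpr h1)]
    rcases le_or_gt ⌊y₂⌋ (n : ℤ) with h2 | h2
    · rw [if_pos h2]
      have : (0:ℝ) ≤ (if (⌊y₁⌋ < (n : ℤ) ∧ (n : ℤ) < ⌊y₂⌋) then a n * x ^ n else 0) := by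
        split
        · exact h0
        · exact le_rfl
      linarith
    · rw [if_pos ⟨h1, h2⟩, if_neg (not_le.mpr h2)]
      linarith

lemma conc_ev {a : ℕ → ℝ} {f : Polynomial ℝ} {C ν : ℝ}
    (ha : AbsMono a) (hne : ∃ n, a n ≠ 0)
    (hconc : SuperConc a (fun x => f.eval x) C ν) :
    ∀ᶠ x : ℝ in atTop, 0 < x ∧
      sumLE a x (f.eval x * (1 - C * x ^ (-ν))) ≤ Iser a x / 4 ∧
      sumGE a x (f.eval x * (1 + C * x ^ (-ν))) ≤ Iser a x / 4 := by
  obtain ⟨h₁, h₂⟩ := hconc 1 one_pos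
  have htend : Tendsto (fun x : ℝ => x ^ (-(1:ℝ))) atTop (nhds 0) :=
    tendsto_rpow_neg_atTop one_pos
  have hLE := (h₁.isBigO).trans_tendsto htend
  have hGE := (h₂.isBigO).trans_tendsto htend
  filter_upwards [hLE.eventually_lt_const (by norm_num : (0:ℝ) < 4⁻¹),
    hGE.eventually_lt_const (by norm_num : (0:ℝ) < 4⁻¹),
    eventually_gt_atTop 0] with x hx1 hx2 hx0
  have hI : 0 < Iser a x := Iser_pos ha hne hx0
  refine ⟨hx0, ?_, ?_⟩
  · have := (div_lt_iff₀ hI).mp hx1; linarith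
  · have := (div_lt_iff₀ hI).mp hx2; linarith

lemma eval_div_tendsto {f : Polynomial ℝ} (hlead : 0 < f.leadingCoeff) :
    Tendsto (fun x : ℝ => f.eval x / x ^ f.natDegree) atTop (nhds f.leadingCoeff) := by
  have h := f.isEquivalent_atTop_lead
  have hz : ∀ᶠ x : ℝ in atTop, f.leadingCoeff * x ^ f.natDegree ≠ 0 := by
    filter_upwards [eventually_gt_atTop 0] with x hx
    positivity
  have h1 : Tendsto (fun x : ℝ => f.eval x / (f.leadingCoeff * x ^ f.natDegree)) atTop
      (nhds 1) := (isEquivalent_iff_tendsto_one hz).mp h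
  have h2 := h1.const_mul f.leadingCoeff
  rw [mul_one] at h2
  refine h2.congr' ?_
  filter_upwards [eventually_gt_atTop 0] with x hx
  have hxd : x ^ f.natDegree ≠ 0 := by positivity
  field_simp

lemma window_tendsto {f : Polynomial ℝ} {ν : ℝ} (hν : 0 < ν) (hlead : 0 < f.leadingCoeff)
    (w : ℝ) :
    Tendsto (fun x : ℝ => f.eval x * (1 + w * x ^ (-ν)) / x ^ f.natDegree) atTop
      (nhds f.leadingCoeff) := by
  have h1 := eval_div_tendsto hlead
  have h2 : Tendsto (fun x : ℝ => 1 + w * x ^ (-ν)) atTop (nhds (1 + w * 0)) :=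
    tendsto_const_nhds.add ((tendsto_rpow_neg_atTop hν).const_mul w)
  have h3 := h1.mul h2
  rw [mul_zero, add_zero, mul_one] at h3
  refine h3.congr fun x => ?_
  ring

lemma step_ineq {a : ℕ → ℝ} {f : Polynomial ℝ} {C ν : ℝ}
    (ha : AbsMono a) (hne : ∃ n, a n ≠ 0)
    (hconc : SuperConc a (fun x => f.eval x) C ν) {l : ℝ} (hl : 1 < l) :
    ∀ᶠ x : ℝ in atTop,
      Real.log (Iser a (l * x)) ≤ Real.log (Iser a x)
          + f.eval (l * x) * (1 + C * (l * x) ^ (-ν)) * Real.log l + 1 ∧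
      Real.log (Iser a x) + f.eval x * (1 - C * x ^ (-ν)) * Real.log l - 1
          ≤ Real.log (Iser a (l * x)) := by
  have hl0 : (0:ℝ) < l := lt_trans one_pos hl
  have hlogl : 0 < Real.log l := Real.log_pos hl
  have hlog2 : Real.log 2 ≤ 1 := by
    have := Real.log_le_sub_one_of_pos (by norm_num : (0:ℝ) < 2); linarith
  have hscale : Tendsto (fun x : ℝ => l * x) atTop atTop :=
    Tendsto.const_mul_atTop hl0 tendsto_id
  filter_upwards [conc_ev ha hne hconc, hscale.eventually (conc_ev ha hne hconc)]
      with x hx hlx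
  obtain ⟨hx0, hxLE, hxGE⟩ := hx
  obtain ⟨hlx0, hlxLE, hlxGE⟩ := hlx
  set ym : ℝ := f.eval x * (1 - C * x ^ (-ν)) with hym
  set yp : ℝ := f.eval x * (1 + C * x ^ (-ν)) with hyp
  set ym' : ℝ := f.eval (l * x) * (1 - C * (l * x) ^ (-ν)) with hym'
  set yp' : ℝ := f.eval (l * x) * (1 + C * (l * x) ^ (-ν)) with hyp'
  have hIx : 0 < Iser a x := Iser_pos ha hne hx0
  have hIl : 0 < Iser a (l * x) := Iser_pos ha hne hlx0
  have hexp : ∀ n : ℕ, Real.exp ((n : ℝ) * Real.log l) = l ^ n := fun n => by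
    rw [Real.exp_nat_mul, Real.exp_log hl0]
  -- middle sum at x
  set Tx : ℝ := ∑' n : ℕ, if (⌊ym⌋ < (n : ℤ) ∧ (n : ℤ) < ⌊yp⌋) then a n * x ^ n else 0 with hTx
  set Tl : ℝ := ∑' n : ℕ,
    if (⌊ym'⌋ < (n : ℤ) ∧ (n : ℤ) < ⌊yp'⌋) then a n * (l * x) ^ n else 0 with hTl
  have hTxIx : Iser a x / 2 ≤ Tx := by
    have h3 := Iser_le_three ha hx0 ym yp
    rw [← hTx] at h3
    linarith
  have hTlIl : Iser a (l * x) / 2 ≤ Tl := by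
    have h3 := Iser_le_three ha hlx0 ym' yp'
    rw [← hTl] at h3
    linarith
  constructor
  · -- upper bound
    have key2 : ∀ n : ℕ,
        (if (⌊ym'⌋ < (n : ℤ) ∧ (n : ℤ) < ⌊yp'⌋) then a n * (l * x) ^ n else 0)
          ≤ Real.exp (yp' * Real.log l) * (a n * x ^ n) := by
      intro n
      by_cases h : (⌊ym'⌋ < (n : ℤ) ∧ (n : ℤ) < ⌊yp'⌋)
      · rw [if_pos h]
        have hn : (n : ℝ) ≤ yp' := by
          have h1 : ((n : ℤ) : ℝ) ≤ (⌊yp'⌋ : ℝ) := by exact_mod_cast h.2.le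
          have h2 := Int.floor_le yp'
          push_cast at h1 ⊢
          linarith
        have hE : l ^ n ≤ Real.exp (yp' * Real.log l) := by
          rw [← hexp n]
          exact Real.exp_le_exp.mpr (mul_le_mul_of_nonneg_right hn hlogl.le)
        calc a n * (l * x) ^ n = l ^ n * (a n * x ^ n) := by rw [mul_pow]; ring
          _ ≤ Real.exp (yp' * Real.log l) * (a n * x ^ n) :=
            mul_le_mul_of_nonneg_right hE (term_nonneg ha hx0.le n)
      · rw [if_neg h]
        exact mul_nonneg (Real.exp_pos _).le (term_nonneg ha hx0.le n)
    have hTl_le : Tl ≤ Real.exp (yp' * Real.log l) * Iser a x := by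
      rw [hTl]
      calc (∑' n : ℕ, if (⌊ym'⌋ < (n : ℤ) ∧ (n : ℤ) < ⌊yp'⌋) then a n * (l * x) ^ n else 0)
          ≤ ∑' n : ℕ, Real.exp (yp' * Real.log l) * (a n * x ^ n) :=
            Summable.tsum_le_tsum key2 (summable_ite ha hlx0 _) ((ha.2 x hx0).mul_left _)
        _ = Real.exp (yp' * Real.log l) * Iser a x := tsum_mul_left
    have hIl2 : Iser a (l * x) ≤ 2 * (Real.exp (yp' * Real.log l) * Iser a x) := by
      linarith
    have := Real.log_le_log hIl hIl2
    rw [Real.log_mul (by norm_num) (by positivity), Real.log_mul (Real.exp_ne_zero _)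
      (ne_of_gt hIx), Real.log_exp] at this
    linarith
  · -- lower bound
    have key1 : ∀ n : ℕ,
        Real.exp (ym * Real.log l) * (if (⌊ym⌋ < (n : ℤ) ∧ (n : ℤ) < ⌊yp⌋) then a n * x ^ n else 0)
          ≤ (if (⌊ym⌋ < (n : ℤ) ∧ (n : ℤ) < ⌊yp⌋) then a n * (l * x) ^ n else 0) := by
      intro n
      by_cases h : (⌊ym⌋ < (n : ℤ) ∧ (n : ℤ) < ⌊yp⌋)
      · rw [if_pos h, if_pos h]
        have hn : ym ≤ (n : ℝ) := by
          have h1 : (⌊ym⌋ + 1 : ℤ) ≤ (n : ℤ) := Int.add_one_le_iff.mpr h.1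
          have h2 : ((⌊ym⌋ : ℝ) + 1) ≤ (n : ℝ) := by exact_mod_cast h1
          have h3 := Int.lt_floor_add_one ym
          linarith
        have hE : Real.exp (ym * Real.log l) ≤ l ^ n := by
          rw [← hexp n]
          exact Real.exp_le_exp.mpr (mul_le_mul_of_nonneg_right hn hlogl.le)
        calc Real.exp (ym * Real.log l) * (a n * x ^ n) ≤ l ^ n * (a n * x ^ n) :=
            mul_le_mul_of_nonneg_right hE (term_nonneg ha hx0.le n)
          _ = a n * (l * x) ^ n := by rw [mul_pow]; ring
      · rw [if_neg h, if_neg h, mul_zero]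
    have hTx_le : Real.exp (ym * Real.log l) * Tx ≤ Iser a (l * x) := by
      calc Real.exp (ym * Real.log l) * Tx
          = ∑' n : ℕ, Real.exp (ym * Real.log l) *
            (if (⌊ym⌋ < (n : ℤ) ∧ (n : ℤ) < ⌊yp⌋) then a n * x ^ n else 0) := tsum_mul_left.symm
        _ ≤ ∑' n : ℕ, (if (⌊ym⌋ < (n : ℤ) ∧ (n : ℤ) < ⌊yp⌋) then a n * (l * x) ^ n else 0) :=
            Summable.tsum_le_tsum key1 ((summable_ite ha hx0 _).mul_left _) (summable_ite ha hlx0 _)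
        _ ≤ Iser a (l * x) := le_Iser_ite ha hlx0 _
    have hIl3 : Real.exp (ym * Real.log l) * (Iser a x / 2) ≤ Iser a (l * x) := by
      have := mul_le_mul_of_nonneg_left hTxIx (Real.exp_pos (ym * Real.log l)).le
      linarith
    have := Real.log_le_log (by positivity) hIl3
    rw [Real.log_mul (Real.exp_ne_zero _) (by positivity), Real.log_exp,
      Real.log_div (ne_of_gt hIx) (by norm_num)] at this
    linarith

lemma telescope_up {L : ℝ → ℝ} {l X B : ℝ} {d : ℕ} (hl : 1 < l) (hX : 0 < X) (hB : 0 ≤ B)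
    (hd : d ≠ 0) (hstep : ∀ x, X ≤ x → L (l * x) ≤ L x + B * (l * x) ^ d + 1) :
    ∀ k : ℕ, ∀ x₀, X ≤ x₀ →
      L (l ^ k * x₀) ≤ L x₀ + k + B * l ^ d / (l ^ d - 1) * (l ^ k * x₀) ^ d := by
  have hl0 : (0:ℝ) < l := lt_trans one_pos hl
  have hq : (1:ℝ) < l ^ d := one_lt_pow₀ hl hd
  intro k
  induction k with
  | zero =>
    intro x₀ hx₀
    have hx₀0 : 0 < x₀ := hX.trans_le hx₀
    have : 0 ≤ B * l ^ d / (l ^ d - 1) * (l ^ 0 * x₀) ^ d := by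
      apply mul_nonneg (div_nonneg (by positivity) (by linarith)) (by positivity)
    simp only [pow_zero, one_mul, Nat.cast_zero, add_zero] at this ⊢
    linarith
  | succ k ih =>
    intro x₀ hx₀
    have hx₀0 : 0 < x₀ := hX.trans_le hx₀
    have hlk : (1:ℝ) ≤ l ^ k := one_le_pow₀ hl.le
    have harg : X ≤ l ^ k * x₀ := by nlinarith
    have h1 := hstep (l ^ k * x₀) harg
    have h2 := ih x₀ hx₀
    have hrw : l * (l ^ k * x₀) = l ^ (k + 1) * x₀ := by ring
    rw [hrw] at h1
    have hpow : (l ^ (k + 1) * x₀) ^ d = l ^ d * (l ^ k * x₀) ^ d := by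
      rw [pow_succ]; ring
    have hkey : B * l ^ d / (l ^ d - 1) * (l ^ k * x₀) ^ d + B * (l ^ (k+1) * x₀) ^ d
        = B * l ^ d / (l ^ d - 1) * (l ^ (k+1) * x₀) ^ d := by
      rw [hpow]
      have : l ^ d - 1 ≠ 0 := by linarith
      field_simp
      ring
    push_cast
    linarith

lemma telescope_lo {L : ℝ → ℝ} {l X B : ℝ} {d : ℕ} (hl : 1 < l) (hX : 0 < X)
    (hd : d ≠ 0) (hstep : ∀ x, X ≤ x → L x + B * x ^ d - 1 ≤ L (l * x)) :
    ∀ k : ℕ, ∀ x₀, X ≤ x₀ →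
      L x₀ - k + B / (l ^ d - 1) * ((l ^ k * x₀) ^ d - x₀ ^ d) ≤ L (l ^ k * x₀) := by
  have hl0 : (0:ℝ) < l := lt_trans one_pos hl
  have hq : (1:ℝ) < l ^ d := one_lt_pow₀ hl hd
  intro k
  induction k with
  | zero =>
    intro x₀ hx₀
    simp
  | succ k ih =>
    intro x₀ hx₀
    have hx₀0 : 0 < x₀ := hX.trans_le hx₀
    have hlk : (1:ℝ) ≤ l ^ k := one_le_pow₀ hl.le
    have harg : X ≤ l ^ k * x₀ := by nlinarith
    have h1 := hstep (l ^ k * x₀) harg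
    have h2 := ih x₀ hx₀
    have hrw : l * (l ^ k * x₀) = l ^ (k + 1) * x₀ := by ring
    rw [hrw] at h1
    have hpow : (l ^ (k + 1) * x₀) ^ d = l ^ d * (l ^ k * x₀) ^ d := by
      rw [pow_succ]; ring
    have hkey : B / (l ^ d - 1) * ((l ^ k * x₀) ^ d - x₀ ^ d) + B * (l ^ k * x₀) ^ d
        = B / (l ^ d - 1) * ((l ^ (k+1) * x₀) ^ d - x₀ ^ d) := by
      rw [hpow]
      have : l ^ d - 1 ≠ 0 := by linarith
      field_simp
      ring
    push_cast
    linarith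

lemma cover_exists {l X : ℝ} (hl : 1 < l) (hX : 1 ≤ X) {y : ℝ} (hy : X ≤ y) :
    ∃ (k : ℕ) (x₀ : ℝ), X ≤ x₀ ∧ x₀ ≤ l * X ∧ y = l ^ k * x₀ ∧
      (k : ℝ) * Real.log l ≤ Real.log y := by
  have hl0 : (0:ℝ) < l := lt_trans one_pos hl
  have hlogl : 0 < Real.log l := Real.log_pos hl
  have hX0 : (0:ℝ) < X := lt_of_lt_of_le one_pos hX
  have hy0 : (0:ℝ) < y := hX0.trans_le hy
  have hyX1 : (1:ℝ) ≤ y / X := (one_le_div hX0).mpr hy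
  have hr0 : 0 ≤ Real.log (y / X) / Real.log l :=
    div_nonneg (Real.log_nonneg hyX1) hlogl.le
  set k : ℕ := ⌊Real.log (y / X) / Real.log l⌋₊ with hk
  have hkle : (k : ℝ) ≤ Real.log (y / X) / Real.log l := Nat.floor_le hr0
  have hklog : (k : ℝ) * Real.log l ≤ Real.log (y / X) := by
    rw [← le_div_iff₀ hlogl] at *; exact hkle
  have hlk_pos : (0:ℝ) < l ^ k := pow_pos hl0 k
  have hlk_le : l ^ k ≤ y / X := by
    have h1 : l ^ k = Real.exp ((k : ℝ) * Real.log l) := by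
      rw [Real.exp_nat_mul, Real.exp_log hl0]
    rw [h1, ← Real.exp_log (lt_of_lt_of_le one_pos hyX1 : (0:ℝ) < y / X)]
    exact Real.exp_le_exp.mpr hklog
  refine ⟨k, y / l ^ k, ?_, ?_, ?_, ?_⟩
  · rw [le_div_iff₀ hlk_pos]
    calc X * l ^ k ≤ X * (y / X) := by
          exact mul_le_mul_of_nonneg_left hlk_le hX0.le
      _ = y := by field_simp
  · have hlt : Real.log (y / X) / Real.log l < (k : ℝ) + 1 := Nat.lt_floor_add_one _
    have h2 : Real.log (y / X) < ((k : ℝ) + 1) * Real.log l := by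
      rw [div_lt_iff₀ hlogl] at hlt; linarith
    have e2 : l ^ (k + 1) = Real.exp (((k + 1 : ℕ) : ℝ) * Real.log l) := by
      rw [Real.exp_nat_mul, Real.exp_log hl0]
    have h3 : y / X < l ^ (k + 1) := by
      rw [e2]
      calc y / X = Real.exp (Real.log (y / X)) :=
            (Real.exp_log (lt_of_lt_of_le one_pos hyX1)).symm
        _ < Real.exp (((k + 1 : ℕ) : ℝ) * Real.log l) := by
            apply Real.exp_lt_exp.mpr; push_cast; linarith
    have h4 : y < l ^ (k + 1) * X := by
      have := (div_lt_iff₀ hX0).mp h3; linarith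
    have h5 : l ^ (k + 1) * X = l * X * l ^ k := by rw [pow_succ]; ring
    rw [div_le_iff₀ hlk_pos]
    rw [h5] at h4
    linarith
  · field_simp
  · calc (k : ℝ) * Real.log l ≤ Real.log (y / X) := hklog
      _ = Real.log y - Real.log X := Real.log_div (ne_of_gt hy0) (ne_of_gt hX0)
      _ ≤ Real.log y := by linarith [Real.log_nonneg hX]

lemma err_tendsto (b c' : ℝ) {d : ℕ} (hd : d ≠ 0) :
    Tendsto (fun y : ℝ => (b + c' * Real.log y) / y ^ d) atTop (nhds 0) := by
  have h1 : Tendsto (fun y : ℝ => b * (y ^ d)⁻¹) atTop (nhds 0) := by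
    have := (tendsto_pow_atTop hd (α := ℝ)).inv_tendsto_atTop
    have h2 := this.const_mul b
    rwa [mul_zero] at h2
  have hlog : Tendsto (fun y : ℝ => Real.log y / y ^ d) atTop (nhds 0) := by
    have ho : (fun y : ℝ => Real.log y) =o[atTop] (fun y : ℝ => y ^ d) := by
      refine Real.isLittleO_log_id_atTop.trans_isBigO ?_
      refine IsBigO.of_bound 1 ?_
      filter_upwards [eventually_ge_atTop (1:ℝ)] with y hy
      simp only [id_eq]
      rw [one_mul, Real.norm_eq_abs, Real.norm_eq_abs, abs_of_nonneg (by linarith),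
        abs_of_nonneg (by positivity)]
      exact le_self_pow₀ (by linarith) hd
    exact ho.tendsto_div_nhds_zero
  have h3 := h1.add (hlog.const_mul c')
  rw [mul_zero, add_zero] at h3
  refine h3.congr fun y => ?_
  field_simp

lemma one_add_pow_le {u : ℝ} (h0 : 0 ≤ u) (h1 : u ≤ 1) :
    ∀ m : ℕ, (1 + u) ^ m ≤ 1 + (2 ^ m - 1) * u := by
  intro m
  induction m with
  | zero => norm_num
  | succ m ih =>
    have h2 : (0:ℝ) ≤ 2 ^ m - 1 := by
      have : (1:ℝ) ≤ 2 ^ m := one_le_pow₀ (by norm_num)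
      linarith
    calc (1 + u) ^ (m + 1) = (1 + u) ^ m * (1 + u) := by rw [pow_succ]
      _ ≤ (1 + (2 ^ m - 1) * u) * (1 + u) := by nlinarith
      _ ≤ 1 + (2 ^ (m + 1) - 1) * u := by
          have hu : (2 ^ m - 1) * u * u ≤ (2 ^ m - 1) * u * 1 :=
            mul_le_mul_of_nonneg_left h1 (mul_nonneg h2 h0)
          rw [pow_succ]; nlinarith

lemma pow_sub_one_le {l : ℝ} (hl : 1 ≤ l) : ∀ d : ℕ, l ^ d - 1 ≤ d * l ^ d * (l - 1) := by
  intro d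
  induction d with
  | zero => norm_num
  | succ d ih =>
    have h1 : (0:ℝ) < l := lt_of_lt_of_le one_pos hl
    have h2 : (1:ℝ) ≤ l ^ d := one_le_pow₀ hl
    have h3 : (1:ℝ) ≤ l ^ (d + 1) := one_le_pow₀ hl
    have key : l ^ (d + 1) - 1 = l * (l ^ d - 1) + (l - 1) := by rw [pow_succ]; ring
    calc l ^ (d + 1) - 1 = l * (l ^ d - 1) + (l - 1) := key
      _ ≤ l * (d * l ^ d * (l - 1)) + (l - 1) := by nlinarith
      _ = (l - 1) * (d * l ^ (d + 1) + 1) := by rw [pow_succ]; ring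
      _ ≤ (d + 1 : ℕ) * l ^ (d + 1) * (l - 1) := by push_cast; nlinarith

lemma updown {a : ℕ → ℝ} {f : Polynomial ℝ} {C ν : ℝ} (hν : 0 < ν)
    (ha : AbsMono a) (hne : ∃ n, a n ≠ 0) (hlead : 0 < f.leadingCoeff)
    (hd : 1 ≤ f.natDegree) (hconc : SuperConc a (fun x => f.eval x) C ν)
    {ε₁ l : ℝ} (hε₁ : 0 < ε₁) (hε₁c : ε₁ < f.leadingCoeff) (hl : 1 < l) :
    ∀ᶠ y : ℝ in atTop,
      Real.log (Iser a y) / y ^ f.natDegree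
          ≤ (f.leadingCoeff + ε₁) * l ^ f.natDegree / f.natDegree + ε₁ ∧
      (f.leadingCoeff - ε₁) / (f.natDegree * l ^ (f.natDegree + 1)) - ε₁
          ≤ Real.log (Iser a y) / y ^ f.natDegree := by
  set d := f.natDegree with hdd
  set c := f.leadingCoeff with hcc
  set L : ℝ → ℝ := fun x => Real.log (Iser a x) with hL
  have hd0 : d ≠ 0 := by omega
  have hdr : (1:ℝ) ≤ (d:ℝ) := by exact_mod_cast hd
  have hdr0 : (0:ℝ) < (d:ℝ) := by linarith
  have hl0 : (0:ℝ) < l := lt_trans one_pos hl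
  have hlogl : 0 < Real.log l := Real.log_pos hl
  have hq : (1:ℝ) < l ^ d := one_lt_pow₀ hl hd0
  have hq1 : (0:ℝ) < l ^ d - 1 := by linarith
  -- window approximations
  have hup : ∀ᶠ x : ℝ in atTop, f.eval x * (1 + C * x ^ (-ν)) ≤ (c + ε₁) * x ^ d := by
    filter_upwards [(window_tendsto hν hlead C).eventually_lt_const
      (lt_add_of_pos_right c hε₁), eventually_gt_atTop (0:ℝ)] with x h hx0
    have := (div_lt_iff₀ (pow_pos hx0 d)).mp h
    linarith
  have hlo : ∀ᶠ x : ℝ in atTop, (c - ε₁) * x ^ d ≤ f.eval x * (1 - C * x ^ (-ν)) := by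
    filter_upwards [(window_tendsto hν hlead (-C)).eventually_const_lt
      (sub_lt_self c hε₁), eventually_gt_atTop (0:ℝ)] with x h hx0
    have h2 := (lt_div_iff₀ (pow_pos hx0 d)).mp h
    have h3 : f.eval x * (1 + -C * x ^ (-ν)) = f.eval x * (1 - C * x ^ (-ν)) := by ring
    linarith [h3 ▸ h2]
  have hscale : Tendsto (fun x : ℝ => l * x) atTop atTop :=
    Tendsto.const_mul_atTop hl0 tendsto_id
  have hstep : ∀ᶠ x : ℝ in atTop,
      (L (l * x) ≤ L x + (c + ε₁) * Real.log l * (l * x) ^ d + 1 ∧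
       L x + (c - ε₁) * Real.log l * x ^ d - 1 ≤ L (l * x)) ∧ 1 ≤ x := by
    filter_upwards [step_ineq ha hne hconc hl, hscale.eventually hup, hlo,
      eventually_ge_atTop (1:ℝ)] with x hs hu hlo' hx1
    refine ⟨⟨?_, ?_⟩, hx1⟩
    · have h1 := hs.1
      have h2 : f.eval (l * x) * (1 + C * (l * x) ^ (-ν)) * Real.log l
          ≤ (c + ε₁) * (l * x) ^ d * Real.log l :=
        mul_le_mul_of_nonneg_right hu hlogl.le
      calc L (l * x) ≤ L x + f.eval (l * x) * (1 + C * (l * x) ^ (-ν)) * Real.log l + 1 := h1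
        _ ≤ L x + (c + ε₁) * (l * x) ^ d * Real.log l + 1 := by linarith
        _ = L x + (c + ε₁) * Real.log l * (l * x) ^ d + 1 := by ring
    · have h1 := hs.2
      have h2 : (c - ε₁) * x ^ d * Real.log l ≤ f.eval x * (1 - C * x ^ (-ν)) * Real.log l :=
        mul_le_mul_of_nonneg_right hlo' hlogl.le
      calc L x + (c - ε₁) * Real.log l * x ^ d - 1
          = L x + (c - ε₁) * x ^ d * Real.log l - 1 := by ring
        _ ≤ L x + f.eval x * (1 - C * x ^ (-ν)) * Real.log l - 1 := by linarith
        _ ≤ L (l * x) := h1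
  rw [eventually_atTop] at hstep
  obtain ⟨X₁, hX₁⟩ := hstep
  set X : ℝ := max X₁ 1 with hXdef
  have hX1 : (1:ℝ) ≤ X := le_max_right _ _
  have hX0 : (0:ℝ) < X := lt_of_lt_of_le one_pos hX1
  have hstep_up : ∀ x, X ≤ x → L (l * x) ≤ L x + (c + ε₁) * Real.log l * (l * x) ^ d + 1 :=
    fun x hx => (hX₁ x ((le_max_left _ _).trans hx)).1.1
  have hstep_lo : ∀ x, X ≤ x → L x + (c - ε₁) * Real.log l * x ^ d - 1 ≤ L (l * x) :=
    fun x hx => (hX₁ x ((le_max_left _ _).trans hx)).1.2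
  have hB : (0:ℝ) ≤ (c + ε₁) * Real.log l := by positivity
  have hB'nn : (0:ℝ) ≤ (c - ε₁) * Real.log l := by
    apply mul_nonneg (by linarith) hlogl.le
  have htel_up := telescope_up hl hX0 hB hd0 hstep_up
  have htel_lo := telescope_lo (B := (c - ε₁) * Real.log l) hl hX0 hd0 hstep_lo
  -- constant comparisons
  have hlogpow : (d:ℝ) * Real.log l ≤ l ^ d - 1 := by
    have h1 := Real.log_le_sub_one_of_pos (pow_pos hl0 d)
    rwa [Real.log_pow] at h1
  have hA : (c + ε₁) * Real.log l * l ^ d / (l ^ d - 1) ≤ (c + ε₁) * l ^ d / (d:ℝ) := by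
    rw [div_le_div_iff₀ hq1 hdr0]
    have hc1 : (0:ℝ) ≤ (c + ε₁) * l ^ d := by positivity
    nlinarith
  have hllogl : l - 1 ≤ l * Real.log l := by
    have h1 := Real.log_le_sub_one_of_pos (inv_pos.mpr hl0)
    rw [Real.log_inv] at h1
    have h2 : 1 - l⁻¹ ≤ Real.log l := by linarith
    have h3 := mul_le_mul_of_nonneg_left h2 hl0.le
    have h4 : l * (1 - l⁻¹) = l - 1 := by field_simp
    linarith [h4 ▸ h3]
  have hB' : (c - ε₁) / ((d:ℝ) * l ^ (d + 1)) ≤ (c - ε₁) * Real.log l / (l ^ d - 1) := by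
    rw [div_le_div_iff₀ (by positivity) hq1]
    have hgeo := pow_sub_one_le hl.le d
    have h5 : l ^ d - 1 ≤ (d:ℝ) * l ^ (d + 1) * Real.log l := by
      have h6 : (d:ℝ) * l ^ d * (l - 1) ≤ (d:ℝ) * l ^ d * (l * Real.log l) :=
        mul_le_mul_of_nonneg_left hllogl (by positivity)
      have h7 : (d:ℝ) * l ^ d * (l * Real.log l) = (d:ℝ) * l ^ (d + 1) * Real.log l := by
        rw [pow_succ]; ring
      linarith [h7 ▸ h6]
    have h8 := mul_le_mul_of_nonneg_left h5 (show (0:ℝ) ≤ c - ε₁ by linarith)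
    calc (c - ε₁) * (l ^ d - 1) ≤ (c - ε₁) * ((d:ℝ) * l ^ (d + 1) * Real.log l) := h8
      _ = (c - ε₁) * Real.log l * ((d:ℝ) * l ^ (d + 1)) := by ring
  -- error terms
  have hupErr : ∀ᶠ y : ℝ in atTop,
      (L (l * X) + 1 / Real.log l * Real.log y) / y ^ d < ε₁ :=
    (err_tendsto (L (l * X)) (1 / Real.log l) hd0).eventually_lt_const hε₁
  have hloErr : ∀ᶠ y : ℝ in atTop,
      -ε₁ < (L X - (c - ε₁) * Real.log l / (l ^ d - 1) * (l * X) ^ d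
          + -(1 / Real.log l) * Real.log y) / y ^ d := by
    have h := err_tendsto (L X - (c - ε₁) * Real.log l / (l ^ d - 1) * (l * X) ^ d)
      (-(1 / Real.log l)) hd0
    exact h.eventually_const_lt (show -ε₁ < 0 by linarith)
  filter_upwards [eventually_ge_atTop X, hupErr, hloErr] with y hyX hupE hloE
  have hy0 : (0:ℝ) < y := hX0.trans_le hyX
  have hyd : (0:ℝ) < y ^ d := pow_pos hy0 d
  obtain ⟨k, x₀, hx₀X, hx₀lX, hyeq, hklog⟩ := cover_exists hl hX1 hyX
  have hx₀0 : (0:ℝ) < x₀ := hX0.trans_le hx₀X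
  have hk2 : (k:ℝ) ≤ 1 / Real.log l * Real.log y := by
    rw [one_div, ← div_eq_inv_mul]
    exact (le_div_iff₀ hlogl).mpr hklog
  constructor
  · -- upper bound
    have hT := htel_up k x₀ hx₀X
    rw [← hyeq] at hT
    have hLx₀ : L x₀ ≤ L (l * X) :=
      Real.log_le_log (Iser_pos ha hne hx₀0) (Iser_mono ha hx₀0 hx₀lX)
    have h5 : L y ≤ (L (l * X) + 1 / Real.log l * Real.log y)
        + (c + ε₁) * Real.log l * l ^ d / (l ^ d - 1) * y ^ d := by linarith
    have h6 : L y / y ^ d ≤ ((L (l * X) + 1 / Real.log l * Real.log y)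
        + (c + ε₁) * Real.log l * l ^ d / (l ^ d - 1) * y ^ d) / y ^ d := by gcongr
    have h7 : ((L (l * X) + 1 / Real.log l * Real.log y)
        + (c + ε₁) * Real.log l * l ^ d / (l ^ d - 1) * y ^ d) / y ^ d
        = (L (l * X) + 1 / Real.log l * Real.log y) / y ^ d
          + (c + ε₁) * Real.log l * l ^ d / (l ^ d - 1) := by
      rw [add_div, mul_div_cancel_right₀ _ (ne_of_gt hyd)]
    rw [h7] at h6
    linarith
  · -- lower bound
    have hT := htel_lo k x₀ hx₀X
    rw [← hyeq] at hT
    have hLx₀ : L X ≤ L x₀ :=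
      Real.log_le_log (Iser_pos ha hne hX0) (Iser_mono ha hX0 hx₀X)
    have hx₀d : x₀ ^ d ≤ (l * X) ^ d := pow_le_pow_left₀ hx₀0.le hx₀lX d
    have hmono : (c - ε₁) * Real.log l / (l ^ d - 1) * (y ^ d - (l * X) ^ d)
        ≤ (c - ε₁) * Real.log l / (l ^ d - 1) * (y ^ d - x₀ ^ d) := by
      apply mul_le_mul_of_nonneg_left (by linarith) (by positivity)
    have h5 : (L X - (c - ε₁) * Real.log l / (l ^ d - 1) * (l * X) ^ d
          + -(1 / Real.log l) * Real.log y)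
        + (c - ε₁) * Real.log l / (l ^ d - 1) * y ^ d ≤ L y := by linarith
    have h6 : ((L X - (c - ε₁) * Real.log l / (l ^ d - 1) * (l * X) ^ d
          + -(1 / Real.log l) * Real.log y)
        + (c - ε₁) * Real.log l / (l ^ d - 1) * y ^ d) / y ^ d ≤ L y / y ^ d := by gcongr
    have h7 : ((L X - (c - ε₁) * Real.log l / (l ^ d - 1) * (l * X) ^ d
          + -(1 / Real.log l) * Real.log y)
        + (c - ε₁) * Real.log l / (l ^ d - 1) * y ^ d) / y ^ d
        = (L X - (c - ε₁) * Real.log l / (l ^ d - 1) * (l * X) ^ d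
          + -(1 / Real.log l) * Real.log y) / y ^ d
          + (c - ε₁) * Real.log l / (l ^ d - 1) := by
      rw [add_div, mul_div_cancel_right₀ _ (ne_of_gt hyd)]
    rw [h7] at h6
    linarith

lemma main_log {a : ℕ → ℝ} {f : Polynomial ℝ} {C ν : ℝ} (hν : 0 < ν)
    (ha : AbsMono a) (hne : ∃ n, a n ≠ 0) (hlead : 0 < f.leadingCoeff)
    (hd : 1 ≤ f.natDegree) (hconc : SuperConc a (fun x => f.eval x) C ν) :
    Tendsto (fun x : ℝ => Real.log (Iser a x) / x ^ f.natDegree) atTop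
      (nhds (f.leadingCoeff / f.natDegree)) := by
  set d := f.natDegree with hdd
  set c := f.leadingCoeff with hcc
  have hd0 : d ≠ 0 := by omega
  have hdr : (1:ℝ) ≤ (d:ℝ) := by exact_mod_cast hd
  have hdr0 : (0:ℝ) < (d:ℝ) := by linarith
  rw [Metric.tendsto_nhds]
  intro ε hε
  set ε₁ : ℝ := min (ε / 8) (c / 2) with hε₁def
  have hε₁ : 0 < ε₁ := lt_min (by linarith) (by linarith)
  have hε₁c : ε₁ < c := (min_le_right _ _).trans_lt (by linarith)
  have hε₁ε : ε₁ ≤ ε / 8 := min_le_left _ _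
  set θ : ℝ := min 1 (ε / (8 * (c + 1))) with hθdef
  have hθ0 : 0 < θ := lt_min one_pos (by positivity)
  have hθ1 : θ ≤ 1 := min_le_left _ _
  have hθε : θ ≤ ε / (8 * (c + 1)) := min_le_right _ _
  have hcθ : c * θ ≤ ε / 8 := by
    have h1 : c * θ ≤ c * (ε / (8 * (c + 1))) := mul_le_mul_of_nonneg_left hθε hlead.le
    have h2 : c * (ε / (8 * (c + 1))) = (c * ε) / (8 * (c + 1)) := by ring
    have h3 : (c * ε) / (8 * (c + 1)) ≤ ε / 8 := by
      rw [div_le_div_iff₀ (by positivity) (by norm_num)]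
      nlinarith
    linarith
  set u : ℝ := θ / 2 ^ (d + 1) with hudef
  have hu0 : 0 < u := by positivity
  have hu1 : u ≤ 1 := by
    have h2 : (1:ℝ) ≤ 2 ^ (d + 1) := one_le_pow₀ (by norm_num)
    rw [hudef, div_le_one (by positivity)]
    linarith
  set l : ℝ := 1 + u with hldef
  have hl : (1:ℝ) < l := by rw [hldef]; linarith
  have hpowl : l ^ (d + 1) ≤ 1 + θ := by
    calc l ^ (d + 1) ≤ 1 + (2 ^ (d + 1) - 1) * u := one_add_pow_le hu0.le hu1 (d + 1)
      _ ≤ 1 + 2 ^ (d + 1) * u := by nlinarith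
      _ = 1 + θ := by rw [hudef]; field_simp
  have hld : l ^ d ≤ 1 + θ :=
    (pow_le_pow_right₀ hl.le (Nat.le_succ d)).trans hpowl
  have h1ld : (1:ℝ) ≤ l ^ d := one_le_pow₀ hl.le
  have h1ld1 : (1:ℝ) ≤ l ^ (d + 1) := one_le_pow₀ hl.le
  filter_upwards [updown hν ha hne hlead hd hconc hε₁ hε₁c hl] with y hy
  obtain ⟨hU, hLo⟩ := hy
  rw [Real.dist_eq, abs_lt]
  constructor
  · -- lower bound
    have step1 : (c - ε₁) / ((d:ℝ) * (1 + θ)) ≤ (c - ε₁) / ((d:ℝ) * l ^ (d + 1)) := by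
      gcongr <;> first
        | linarith
        | positivity
        | nlinarith [hpowl, hdr0]
    have step2 : (c - ε₁ - c * θ) / (d:ℝ) ≤ (c - ε₁) / ((d:ℝ) * (1 + θ)) := by
      rw [div_le_div_iff₀ hdr0 (by positivity)]
      have hint : (0:ℝ) ≤ (d:ℝ) * (θ * ε₁ + c * (θ * θ)) := by positivity
      nlinarith [hint]
    have step3 : c / (d:ℝ) - (ε₁ + c * θ) ≤ (c - ε₁ - c * θ) / (d:ℝ) := by
      have e1 : (c - ε₁ - c * θ) / (d:ℝ) = c / (d:ℝ) - (ε₁ + c * θ) / (d:ℝ) := by ring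
      have e2 : (ε₁ + c * θ) / (d:ℝ) ≤ ε₁ + c * θ := div_le_self (by positivity) hdr
      linarith
    linarith
  · -- upper bound
    have e1 : (c + ε₁) * l ^ d ≤ (c + ε₁) * (1 + θ) := by
      apply mul_le_mul_of_nonneg_left hld (by positivity)
    have e2 : ε₁ * θ ≤ ε₁ * 1 := mul_le_mul_of_nonneg_left hθ1 hε₁.le
    have ustep1 : (c + ε₁) * l ^ d ≤ c + 3 * (ε / 8) := by nlinarith
    have ustep2 : (c + ε₁) * l ^ d / (d:ℝ) ≤ (c + 3 * (ε / 8)) / (d:ℝ) := by gcongr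
    have ustep3 : (c + 3 * (ε / 8)) / (d:ℝ) = c / (d:ℝ) + 3 * (ε / 8) / (d:ℝ) := add_div _ _ _
    have ustep4 : 3 * (ε / 8) / (d:ℝ) ≤ 3 * (ε / 8) := div_le_self (by positivity) hdr
    linarith

lemma main_sup {a : ℕ → ℝ} {f : Polynomial ℝ} {C ν : ℝ} (hν : 0 < ν)
    (ha : AbsMono a) (hne : ∃ n, a n ≠ 0) (hlead : 0 < f.leadingCoeff)
    (hd : 1 ≤ f.natDegree) (hconc : SuperConc a (fun x => f.eval x) C ν) :
    Tendsto (fun x : ℝ => Real.log (⨆ n : ℕ, a n * x ^ n) / x ^ f.natDegree) atTop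
      (nhds (f.leadingCoeff / f.natDegree)) := by
  set d := f.natDegree with hdd
  set c := f.leadingCoeff with hcc
  have hd0 : d ≠ 0 := by omega
  have hmain := main_log hν ha hne hlead hd hconc
  -- lower comparison function tends to the same limit
  have hlow : Tendsto (fun x : ℝ =>
      (Real.log (Iser a x) - (Real.log 2 + ((d:ℝ) + 1) * Real.log x)) / x ^ d) atTop
      (nhds (c / d)) := by
    have h2 := hmain.sub (err_tendsto (Real.log 2) ((d:ℝ) + 1) hd0)
    rw [sub_zero] at h2
    refine h2.congr fun x => ?_
    rw [← sub_div]
  refine tendsto_of_tendsto_of_tendsto_of_le_of_le' hlow hmain ?_ ?_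
  · -- lower eventual bound
    have hyp_pos : ∀ᶠ x : ℝ in atTop, 0 < f.eval x * (1 + C * x ^ (-ν)) := by
      filter_upwards [(window_tendsto hν hlead C).eventually_const_lt hlead,
        eventually_gt_atTop (0:ℝ)] with x h hx0
      have := (lt_div_iff₀ (pow_pos hx0 d)).mp h
      nlinarith [pow_pos hx0 d]
    have hyp_le : ∀ᶠ x : ℝ in atTop, f.eval x * (1 + C * x ^ (-ν)) ≤ (c + 1) * x ^ d := by
      filter_upwards [(window_tendsto hν hlead C).eventually_lt_const (lt_add_one c),
        eventually_gt_atTop (0:ℝ)] with x h hx0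
      have := (div_lt_iff₀ (pow_pos hx0 d)).mp h
      linarith
    filter_upwards [conc_ev ha hne hconc, hyp_pos, hyp_le,
      eventually_ge_atTop (c + 1), eventually_ge_atTop (1:ℝ)] with x hx hyp0 hyple hxc hx1
    obtain ⟨hx0, hxLE, hxGE⟩ := hx
    have hxd : (0:ℝ) < x ^ d := pow_pos hx0 d
    set ym : ℝ := f.eval x * (1 - C * x ^ (-ν)) with hym
    set yp : ℝ := f.eval x * (1 + C * x ^ (-ν)) with hyp
    set μ : ℝ := ⨆ n : ℕ, a n * x ^ n with hμ
    have hbdd : BddAbove (Set.range fun n : ℕ => a n * x ^ n) := by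
      refine ⟨Iser a x, ?_⟩
      rintro _ ⟨n, rfl⟩
      exact Summable.le_tsum (ha.2 x hx0) n fun j _ => term_nonneg ha hx0.le j
    have hμpos : 0 < μ := by
      obtain ⟨n₀, hn₀⟩ := hne
      have h1 : 0 < a n₀ * x ^ n₀ :=
        mul_pos (lt_of_le_of_ne (ha.1 n₀) (Ne.symm hn₀)) (pow_pos hx0 n₀)
      exact h1.trans_le (le_ciSup hbdd n₀)
    have hI : 0 < Iser a x := Iser_pos ha hne hx0
    set K : ℕ := (⌊yp⌋).toNat with hK
    -- middle sum bounded by K * μ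
    have hT3 := Iser_le_three ha hx0 ym yp
    have hTle : (∑' n : ℕ, if (⌊ym⌋ < (n : ℤ) ∧ (n : ℤ) < ⌊yp⌋) then a n * x ^ n else 0)
        ≤ (K:ℝ) * μ := by
      have key : ∀ n : ℕ, (if (⌊ym⌋ < (n : ℤ) ∧ (n : ℤ) < ⌊yp⌋) then a n * x ^ n else 0)
          ≤ (if n ∈ Finset.range K then μ else 0) := by
        intro n
        by_cases h : (⌊ym⌋ < (n : ℤ) ∧ (n : ℤ) < ⌊yp⌋)
        · rw [if_pos h, if_pos (Finset.mem_range.mpr (Int.lt_toNat.mpr h.2))]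
          exact le_ciSup hbdd n
        · rw [if_neg h]
          split
          · exact hμpos.le
          · exact le_rfl
      have hsum2 : Summable fun n : ℕ => if n ∈ Finset.range K then μ else 0 :=
        summable_of_ne_finset_zero (s := Finset.range K) fun n hn => if_neg hn
      calc (∑' n : ℕ, if (⌊ym⌋ < (n : ℤ) ∧ (n : ℤ) < ⌊yp⌋) then a n * x ^ n else 0)
          ≤ ∑' n : ℕ, (if n ∈ Finset.range K then μ else 0) :=
            Summable.tsum_le_tsum key (summable_ite ha hx0 _) hsum2
        _ = ∑ n ∈ Finset.range K, (if n ∈ Finset.range K then μ else 0) :=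
            tsum_eq_sum fun n hn => if_neg hn
        _ = ∑ _n ∈ Finset.range K, μ := Finset.sum_congr rfl fun n hn => if_pos hn
        _ = (K:ℝ) * μ := by rw [Finset.sum_const, Finset.card_range, nsmul_eq_mul]
    have hKμ : Iser a x / 2 ≤ (K:ℝ) * μ := by linarith
    have hK0 : (0:ℝ) < (K:ℝ) := by
      rcases Nat.eq_zero_or_pos K with h | h
      · rw [h] at hKμ; push_cast at hKμ; linarith
      · exact_mod_cast h
    have hKx : (K:ℝ) ≤ x ^ (d + 1) := by
      have h1 : ((K:ℤ):ℝ) = ((⌊yp⌋:ℤ):ℝ) := by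
        rw [hK, Int.toNat_of_nonneg (Int.floor_nonneg.mpr hyp0.le)]
      have h2 : (K:ℝ) ≤ yp := by
        push_cast at h1
        rw [h1]
        exact Int.floor_le yp
      have h3 : (c + 1) * x ^ d ≤ x ^ (d + 1) := by
        rw [pow_succ]
        nlinarith
      linarith
    -- take logs
    have hlog1 : Real.log (Iser a x) - Real.log 2 ≤ Real.log (K * μ) := by
      have := Real.log_le_log (by positivity) hKμ
      rwa [Real.log_div (ne_of_gt hI) (by norm_num)] at this
    have hlog2 : Real.log ((K:ℝ) * μ) = Real.log (K:ℝ) + Real.log μ :=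
      Real.log_mul (ne_of_gt hK0) (ne_of_gt hμpos)
    have hlog3 : Real.log (K:ℝ) ≤ ((d:ℝ) + 1) * Real.log x := by
      have h4 := Real.log_le_log hK0 hKx
      rwa [Real.log_pow, Nat.cast_add, Nat.cast_one] at h4
    have hfinal : Real.log (Iser a x) - (Real.log 2 + ((d:ℝ) + 1) * Real.log x)
        ≤ Real.log μ := by linarith
    gcongr
  · -- upper eventual bound
    filter_upwards [eventually_gt_atTop (0:ℝ)] with x hx0
    have hxd : (0:ℝ) < x ^ d := pow_pos hx0 d
    have hbdd : BddAbove (Set.range fun n : ℕ => a n * x ^ n) := by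
      refine ⟨Iser a x, ?_⟩
      rintro _ ⟨n, rfl⟩
      exact Summable.le_tsum (ha.2 x hx0) n fun j _ => term_nonneg ha hx0.le j
    have hμI : (⨆ n : ℕ, a n * x ^ n) ≤ Iser a x :=
      ciSup_le fun n => Summable.le_tsum (ha.2 x hx0) n fun j _ => term_nonneg ha hx0.le j
    have hμpos : 0 < ⨆ n : ℕ, a n * x ^ n := by
      obtain ⟨n₀, hn₀⟩ := hne
      have h1 : 0 < a n₀ * x ^ n₀ :=
        mul_pos (lt_of_le_of_ne (ha.1 n₀) (Ne.symm hn₀)) (pow_pos hx0 n₀)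
      exact h1.trans_le (le_ciSup hbdd n₀)
    have := Real.log_le_log hμpos hμI
    gcongr


theorem stmt4 (a : ℕ → ℝ) (f : Polynomial ℝ) (C ν : ℝ) (hC : 0 < C) (hν : 0 < ν)
    (ha : AbsMono a) (hne : ∃ n, a n ≠ 0) (hlead : 0 < f.leadingCoeff)
    (hd : 1 ≤ f.natDegree)
    (hconc : SuperConc a (fun x => f.eval x) C ν) :
    Tendsto (fun x : ℝ => Real.log (Iser a x) / x ^ f.natDegree) atTop
        (nhds (f.leadingCoeff / f.natDegree)) ∧
      Tendsto (fun x : ℝ => Real.log (⨆ n : ℕ, a n * x ^ n) / x ^ f.natDegree) atTop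
        (nhds (f.leadingCoeff / f.natDegree)) := by
  exact ⟨main_log hν ha hne hlead hd hconc, main_sup hν ha hne hlead hd hconc⟩
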